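/- Let q be a prime power. There exists an antipodal plane of order 2 together with an embedding of it into PG(2,q) if and only if q is a power of 3 or q ≡ 1 (mod 3). -/

import Mathlib

/-- An antipodal plane of order `s`: a partial linear space with
`s^2 + s + 2` points and lines, every line incident with exactly `s + 1` points and
every point incident with exactly `s + 1` lines. -/
structure IsAntipodalPlane {P L : Type*} (s : ℕ) (R : P → L → Prop) : Prop where
  line_two_le : ∀ l : L, 2 ≤ {x | R x l}.ncard
  partial_linear : ∀ x y : P, x ≠ y → ∀ l m : L, R x l → R y l → R x m → R y m → l = m
  card_points : Nat.card P = s ^ 2 + s + 2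
  card_lines : Nat.card L = s ^ 2 + s + 2
  line_card : ∀ l : L, {x | R x l}.ncard = s + 1
  point_card : ∀ x : P, {l | R x l}.ncard = s + 1

/-- Points of `PG(2,q)`: the 1-dimensional subspaces of `F_q ^ 3`. -/
def PGPoint (F : Type*) [Field F] : Type _ :=
  {W : Submodule F (Fin 3 → F) // Module.finrank F W = 1}

/-- Lines of `PG(2,q)`: the 2-dimensional subspaces of `F_q ^ 3`. -/
def PGLine (F : Type*) [Field F] : Type _ :=
  {W : Submodule F (Fin 3 → F) // Module.finrank F W = 2}

/-- Incidence in `PG(2,q)`: containment of subspaces. -/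
def PGIncidence (F : Type*) [Field F] : PGPoint F → PGLine F → Prop :=
  fun x l => x.1 ≤ l.1

/-- An embedding of the incidence structure `R` into the incidence structure `R'`:
injective maps on points and lines preserving incidence and non-incidence. -/
def HasEmbedding {P L P' L' : Type*} (R : P → L → Prop) (R' : P' → L' → Prop) : Prop :=
  ∃ (φ : P → P') (ψ : L → L'), Function.Injective φ ∧ Function.Injective ψ ∧
    ∀ (x : P) (l : L), R x l ↔ R' (φ x) (ψ l)

section AuxAntipodal
open Submodule Module

variable {F : Type} [Field F]

lemma span_pair_le {x y : Fin 3 → F} {W : Submodule F (Fin 3 → F)}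
    (hx : x ∈ W) (hy : y ∈ W) : span F {x, y} ≤ W := by
  rw [span_le]
  rintro t ht
  rcases ht with rfl | ht
  · exact hx
  · rw [Set.mem_singleton_iff] at ht; subst ht; exact hy

lemma range_pair (x y : Fin 3 → F) : Set.range ![x, y] = {x, y} := by
  ext t
  constructor
  · rintro ⟨i, rfl⟩; fin_cases i <;> simp
  · rintro (rfl | rfl)
    · exact ⟨0, rfl⟩
    · exact ⟨1, rfl⟩

lemma range_triple (x y z : Fin 3 → F) : Set.range ![x, y, z] = {x, y, z} := by
  ext t
  constructor
  · rintro ⟨i, rfl⟩; fin_cases i <;> simp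
  · rintro (rfl | rfl | rfl)
    · exact ⟨0, rfl⟩
    · exact ⟨1, rfl⟩
    · exact ⟨2, rfl⟩

lemma pair_indep {x y : Fin 3 → F}
    (h : ∀ s t : F, s • x + t • y = 0 → s = 0 ∧ t = 0) :
    LinearIndependent F ![x, y] := by
  rw [Fintype.linearIndependent_iff]
  intro g hg
  rw [Fin.sum_univ_two] at hg
  obtain ⟨h0, h1⟩ := h _ _ hg
  intro i; fin_cases i
  · exact h0
  · exact h1

lemma span_pair_finrank {x y : Fin 3 → F}
    (h : ∀ s t : F, s • x + t • y = 0 → s = 0 ∧ t = 0) :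
    finrank F (span F ({x, y} : Set (Fin 3 → F))) = 2 := by
  have hli := pair_indep h
  have h2 := finrank_span_eq_card (R := F) hli
  rw [range_pair] at h2
  rw [h2]
  simp

lemma span_pair_eq {x y : Fin 3 → F} {W : Submodule F (Fin 3 → F)}
    (h2 : finrank F W = 2) (hx : x ∈ W) (hy : y ∈ W)
    (h : ∀ s t : F, s • x + t • y = 0 → s = 0 ∧ t = 0) :
    span F ({x, y} : Set (Fin 3 → F)) = W :=
  eq_of_le_of_finrank_eq (span_pair_le hx hy) (by rw [span_pair_finrank h, h2])

lemma pg_gen (X : PGPoint F) : ∃ v, v ≠ 0 ∧ X.1 = span F {v} := by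
  have h1 := X.2
  have hbot : X.1 ≠ ⊥ := by
    intro hb
    rw [hb] at h1
    simp [finrank_bot] at h1
  obtain ⟨v, hvmem, hvne⟩ := Submodule.exists_mem_ne_zero_of_ne_bot hbot
  refine ⟨v, hvne, ?_⟩
  refine (eq_of_le_of_finrank_eq ((span_singleton_le_iff_mem v X.1).mpr hvmem) ?_).symm
  rw [finrank_span_singleton hvne, h1]

lemma pg_not_mem_span {X Y : PGPoint F} {v w : Fin 3 → F}
    (hX : X.1 = span F {v}) (hY : Y.1 = span F {w}) (hv : v ≠ 0)
    (hne : X ≠ Y) : v ∉ span F {w} := by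
  intro hmem
  apply hne
  apply Subtype.ext
  rw [hX, hY]
  refine eq_of_le_of_finrank_eq ((span_singleton_le_iff_mem v _).mpr hmem) ?_
  rw [finrank_span_singleton hv]
  have h1 := Y.2
  rw [hY] at h1
  rw [h1]

lemma chase {P L : Type} (R : P → L → Prop)
    (φ : P → PGPoint F) (ψ : L → PGLine F)
    (hφ : Function.Injective φ)
    (hiff : ∀ x l, R x l ↔ PGIncidence F (φ x) (ψ l))
    (p1 p5 qa qb qc qA qB qC : P)
    (h15 : p1 ≠ p5) (h1a : p1 ≠ qa) (h5B : p5 ≠ qB)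
    (hA1 : qA ≠ p1) (hAa : qA ≠ qa) (hAB : qA ≠ qB) (hA5 : qA ≠ p5) (hAC : qA ≠ qC)
    (h5a : p5 ≠ qa) (h51 : p5 ≠ p1) (h5c : p5 ≠ qc) (h5A : p5 ≠ qA)
    (hBa : qB ≠ qa) (hB1 : qB ≠ p1) (hC5 : qC ≠ p5) (hCa : qC ≠ qa)
    (hb5 : qb ≠ p5) (hc1 : qc ≠ p1)
    (M N l1a l1b l1c l5a l5b l5c : L)
    (hM : {x | R x M} = {qa, qb, qc})
    (hN : {x | R x N} = {qA, qB, qC})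
    (h1aS : {x | R x l1a} = {p1, qa, qB})
    (h1bS : {x | R x l1b} = {p1, qb, qC})
    (h1cS : {x | R x l1c} = {p1, qc, qA})
    (h5aS : {x | R x l5a} = {p5, qa, qC})
    (h5bS : {x | R x l5b} = {p5, qb, qA})
    (h5cS : {x | R x l5c} = {p5, qc, qB}) :
    ∃ z : F, z ^ 2 - z + 1 = 0 := by
  classical
  -- membership helpers
  have haveR : ∀ {l : L} {s : Set P}, {t | R t l} = s → ∀ {w : P}, w ∈ s → R w l := by
    intro l s hs w hw
    have : w ∈ {t | R t l} := by rw [hs]; exact hw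
    exact this
  have haveNR : ∀ {l : L} {s : Set P}, {t | R t l} = s → ∀ {w : P}, w ∉ s → ¬R w l := by
    intro l s hs w hw hR
    exact hw (by rw [← hs]; exact hR)
  -- generators
  obtain ⟨v1, hv1ne, hv1⟩ := pg_gen (φ p1)
  obtain ⟨v3, hv3ne, hv3⟩ := pg_gen (φ qa)
  obtain ⟨v5, hv5ne, hv5⟩ := pg_gen (φ p5)
  obtain ⟨v7, hv7ne, hv7⟩ := pg_gen (φ qA)
  obtain ⟨u8, hu8ne, hu8⟩ := pg_gen (φ qB)
  obtain ⟨u2, hu2ne, hu2⟩ := pg_gen (φ qC)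
  obtain ⟨u4, hu4ne, hu4⟩ := pg_gen (φ qb)
  obtain ⟨u6, hu6ne, hu6⟩ := pg_gen (φ qc)
  have hRiff : ∀ (x : P) (l : L) (v : Fin 3 → F), (φ x).1 = span F {v} →
      (R x l ↔ v ∈ (ψ l).1) := by
    intro x l v hx
    rw [hiff x l]
    show (φ x).1 ≤ (ψ l).1 ↔ _
    rw [hx, span_singleton_le_iff_mem]
  -- memberships
  have m13_1 : v1 ∈ (ψ l1a).1 := (hRiff _ _ _ hv1).mp (haveR h1aS (by simp))
  have m13_3 : v3 ∈ (ψ l1a).1 := (hRiff _ _ _ hv3).mp (haveR h1aS (by simp))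
  have m13_8 : u8 ∈ (ψ l1a).1 := (hRiff _ _ _ hu8).mp (haveR h1aS (by simp))
  have m35_3 : v3 ∈ (ψ l5a).1 := (hRiff _ _ _ hv3).mp (haveR h5aS (by simp))
  have m35_5 : v5 ∈ (ψ l5a).1 := (hRiff _ _ _ hv5).mp (haveR h5aS (by simp))
  have m35_2 : u2 ∈ (ψ l5a).1 := (hRiff _ _ _ hu2).mp (haveR h5aS (by simp))
  have m17_1 : v1 ∈ (ψ l1c).1 := (hRiff _ _ _ hv1).mp (haveR h1cS (by simp))
  have m17_7 : v7 ∈ (ψ l1c).1 := (hRiff _ _ _ hv7).mp (haveR h1cS (by simp))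
  have m17_6 : u6 ∈ (ψ l1c).1 := (hRiff _ _ _ hu6).mp (haveR h1cS (by simp))
  have m57_5 : v5 ∈ (ψ l5b).1 := (hRiff _ _ _ hv5).mp (haveR h5bS (by simp))
  have m57_7 : v7 ∈ (ψ l5b).1 := (hRiff _ _ _ hv7).mp (haveR h5bS (by simp))
  have m57_4 : u4 ∈ (ψ l5b).1 := (hRiff _ _ _ hu4).mp (haveR h5bS (by simp))
  have m124_1 : v1 ∈ (ψ l1b).1 := (hRiff _ _ _ hv1).mp (haveR h1bS (by simp))
  have m124_4 : u4 ∈ (ψ l1b).1 := (hRiff _ _ _ hu4).mp (haveR h1bS (by simp))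
  have m124_2 : u2 ∈ (ψ l1b).1 := (hRiff _ _ _ hu2).mp (haveR h1bS (by simp))
  have mM_3 : v3 ∈ (ψ M).1 := (hRiff _ _ _ hv3).mp (haveR hM (by simp))
  have mM_4 : u4 ∈ (ψ M).1 := (hRiff _ _ _ hu4).mp (haveR hM (by simp))
  have mM_6 : u6 ∈ (ψ M).1 := (hRiff _ _ _ hu6).mp (haveR hM (by simp))
  have m568_5 : v5 ∈ (ψ l5c).1 := (hRiff _ _ _ hv5).mp (haveR h5cS (by simp))
  have m568_6 : u6 ∈ (ψ l5c).1 := (hRiff _ _ _ hu6).mp (haveR h5cS (by simp))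
  have m568_8 : u8 ∈ (ψ l5c).1 := (hRiff _ _ _ hu8).mp (haveR h5cS (by simp))
  have mN_7 : v7 ∈ (ψ N).1 := (hRiff _ _ _ hv7).mp (haveR hN (by simp))
  have mN_8 : u8 ∈ (ψ N).1 := (hRiff _ _ _ hu8).mp (haveR hN (by simp))
  have mN_2 : u2 ∈ (ψ N).1 := (hRiff _ _ _ hu2).mp (haveR hN (by simp))
  -- non-incidences
  have nr5_13 : ¬ R p5 l1a := haveNR h1aS (by simp [h51, h5a, h5B])
  have nrA_13 : ¬ R qA l1a := haveNR h1aS (by simp [hA1, hAa, hAB])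
  have nrA_35 : ¬ R qA l5a := haveNR h5aS (by simp [hA5, hAa, hAC])
  have nr5_17 : ¬ R p5 l1c := haveNR h1cS (by simp [h51, h5c, h5A])
  -- independence of v1 v3 v5
  have key0 : ∀ x y z : F, x • v1 + y • v3 + z • v5 = 0 → x = 0 ∧ y = 0 ∧ z = 0 := by
    intro x y z hxyz
    by_cases hz : z = 0
    · subst hz
      by_cases hy : y = 0
      · subst hy
        have hx : x • v1 = 0 := by linear_combination (norm := module) hxyz
        rcases smul_eq_zero.mp hx with h | h
        · exact ⟨h, rfl, rfl⟩
        · exact absurd h hv1ne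
      · exfalso
        have h3 : v3 ∈ span F {v1} := by
          rw [mem_span_singleton]
          refine ⟨y⁻¹ * -x, ?_⟩
          rw [mul_smul]
          have h' : y • v3 = (-x) • v1 := by linear_combination (norm := module) hxyz
          rw [← h', inv_smul_smul₀ hy]
        exact pg_not_mem_span hv3 hv1 hv3ne (fun h => h1a (hφ h).symm) h3
    · exfalso
      have h5 : v5 ∈ span F {v1, v3} := by
        rw [mem_span_pair]
        refine ⟨z⁻¹ * -x, z⁻¹ * -y, ?_⟩
        rw [mul_smul, mul_smul, ← smul_add]
        have h' : (-x) • v1 + (-y) • v3 = z • v5 := by linear_combination (norm := module) -hxyz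
        rw [h', inv_smul_smul₀ hz]
      exact nr5_13 ((hRiff _ _ _ hv5).mpr (span_pair_le m13_1 m13_3 h5))
  have li3 : LinearIndependent F ![v1, v3, v5] := by
    rw [Fintype.linearIndependent_iff]
    intro g hg
    rw [Fin.sum_univ_three] at hg
    obtain ⟨h0, h1, h2⟩ := key0 _ _ _ hg
    intro i; fin_cases i
    · exact h0
    · exact h1
    · exact h2
  have htop : span F ({v1, v3, v5} : Set (Fin 3 → F)) = ⊤ := by
    apply eq_top_of_finrank_eq
    have h2 := finrank_span_eq_card (R := F) li3
    rw [range_triple] at h2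
    rw [h2]
    simp
  -- coordinates of v7
  have hv7top : v7 ∈ span F ({v1, v3, v5} : Set (Fin 3 → F)) := by rw [htop]; trivial
  rw [show ({v1, v3, v5} : Set (Fin 3 → F)) = insert v1 {v3, v5} from rfl, span_insert] at hv7top
  obtain ⟨y1', hy1', z1', hz1', hsum⟩ := Submodule.mem_sup.mp hv7top
  obtain ⟨al, hal⟩ := mem_span_singleton.mp hy1'
  obtain ⟨be, ga, hbg⟩ := mem_span_pair.mp hz1'
  have hv7e : v7 = al • v1 + be • v3 + ga • v5 := by
    rw [← hsum, ← hal, ← hbg]; module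
  have hganz : ga ≠ 0 := by
    intro h0
    apply nrA_13
    refine (hRiff _ _ _ hv7).mpr (span_pair_le m13_1 m13_3 ?_)
    rw [mem_span_pair]
    exact ⟨al, be, by rw [hv7e, h0]; module⟩
  have halnz : al ≠ 0 := by
    intro h0
    apply nrA_35
    refine (hRiff _ _ _ hv7).mpr (span_pair_le m35_3 m35_5 ?_)
    rw [mem_span_pair]
    exact ⟨be, ga, by rw [hv7e, h0]; module⟩
  have hbenz : be ≠ 0 := by
    intro h0
    apply nr5_17
    refine (hRiff _ _ _ hv5).mpr (span_pair_le m17_1 m17_7 ?_)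
    rw [mem_span_pair]
    refine ⟨ga⁻¹ * -al, ga⁻¹, ?_⟩
    rw [mul_smul, ← smul_add]
    have h' : (-al) • v1 + v7 = ga • v5 := by
      rw [hv7e, h0]; module
    rw [h', inv_smul_smul₀ hganz]
  -- rescaled basis
  set e1 : Fin 3 → F := al • v1 with he1
  set e2 : Fin 3 → F := be • v3 with he2
  set e3 : Fin 3 → F := ga • v5 with he3
  have he7 : v7 = e1 + e2 + e3 := by rw [he1, he2, he3, hv7e]
  have key : ∀ x y z : F, x • e1 + y • e2 + z • e3 = 0 → x = 0 ∧ y = 0 ∧ z = 0 := by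
    intro x y z h
    have h' : (x * al) • v1 + (y * be) • v3 + (z * ga) • v5 = 0 := by
      rw [mul_smul, mul_smul, mul_smul]
      rw [he1, he2, he3] at h
      linear_combination (norm := module) h
    obtain ⟨h0, h1, h2⟩ := key0 _ _ _ h'
    refine ⟨?_, ?_, ?_⟩
    · rcases mul_eq_zero.mp h0 with h | h
      · exact h
      · exact absurd h halnz
    · rcases mul_eq_zero.mp h1 with h | h
      · exact h
      · exact absurd h hbenz
    · rcases mul_eq_zero.mp h2 with h | h
      · exact h
      · exact absurd h hganz
  -- memberships of scaled vectors
  have me1_13 : e1 ∈ (ψ l1a).1 := smul_mem _ _ m13_1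
  have me2_13 : e2 ∈ (ψ l1a).1 := smul_mem _ _ m13_3
  have me2_35 : e2 ∈ (ψ l5a).1 := smul_mem _ _ m35_3
  have me3_35 : e3 ∈ (ψ l5a).1 := smul_mem _ _ m35_5
  have me1_17 : e1 ∈ (ψ l1c).1 := smul_mem _ _ m17_1
  have me3_57 : e3 ∈ (ψ l5b).1 := smul_mem _ _ m57_5
  have me1_124 : e1 ∈ (ψ l1b).1 := smul_mem _ _ m124_1
  have me2_M : e2 ∈ (ψ M).1 := smul_mem _ _ mM_3
  have me3_568 : e3 ∈ (ψ l5c).1 := smul_mem _ _ m568_5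
  -- W13 = span {e1, e2}
  have hW13 : span F ({e1, e2} : Set (Fin 3 → F)) = (ψ l1a).1 := by
    refine span_pair_eq (ψ l1a).2 me1_13 me2_13 ?_
    intro s t h
    have := key s t 0 (by linear_combination (norm := module) h)
    exact ⟨this.1, this.2.1⟩
  obtain ⟨s8, t8, h8⟩ := mem_span_pair.mp (by rw [hW13]; exact m13_8 :
    u8 ∈ span F ({e1, e2} : Set (Fin 3 → F)))
  have hs8 : s8 ≠ 0 := by
    intro h0
    refine pg_not_mem_span hu8 hv3 hu8ne (fun h => hBa (hφ h)) ?_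
    rw [mem_span_singleton]
    exact ⟨t8 * be, by rw [mul_smul, ← he2, ← h8, h0]; module⟩
  have ht8 : t8 ≠ 0 := by
    intro h0
    refine pg_not_mem_span hu8 hv1 hu8ne (fun h => hB1 (hφ h)) ?_
    rw [mem_span_singleton]
    exact ⟨s8 * al, by rw [mul_smul, ← he1, ← h8, h0]; module⟩
  -- W35 = span {e2, e3}
  have hW35 : span F ({e2, e3} : Set (Fin 3 → F)) = (ψ l5a).1 := by
    refine span_pair_eq (ψ l5a).2 me2_35 me3_35 ?_
    intro s t h
    have := key 0 s t (by linear_combination (norm := module) h)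
    exact ⟨this.2.1, this.2.2⟩
  obtain ⟨s2, t2, h2⟩ := mem_span_pair.mp (by rw [hW35]; exact m35_2 :
    u2 ∈ span F ({e2, e3} : Set (Fin 3 → F)))
  have hs2 : s2 ≠ 0 := by
    intro h0
    refine pg_not_mem_span hu2 hv5 hu2ne (fun h => hC5 (hφ h)) ?_
    rw [mem_span_singleton]
    exact ⟨t2 * ga, by rw [mul_smul, ← he3, ← h2, h0]; module⟩
  have ht2 : t2 ≠ 0 := by
    intro h0
    refine pg_not_mem_span hu2 hv3 hu2ne (fun h => hCa (hφ h)) ?_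
    rw [mem_span_singleton]
    exact ⟨s2 * be, by rw [mul_smul, ← he2, ← h2, h0]; module⟩
  -- W57 = span {e3, v7}
  have hW57 : span F ({e3, v7} : Set (Fin 3 → F)) = (ψ l5b).1 := by
    refine span_pair_eq (ψ l5b).2 me3_57 m57_7 ?_
    intro s t h
    have h' : t • e1 + t • e2 + (s + t) • e3 = 0 := by
      rw [he7] at h
      linear_combination (norm := module) h
    obtain ⟨ha', hb', hc'⟩ := key _ _ _ h'
    exact ⟨by linear_combination hc' - ha', ha'⟩
  obtain ⟨s4, t4, h4⟩ := mem_span_pair.mp (by rw [hW57]; exact m57_4 :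
    u4 ∈ span F ({e3, v7} : Set (Fin 3 → F)))
  have ht4 : t4 ≠ 0 := by
    intro h0
    refine pg_not_mem_span hu4 hv5 hu4ne (fun h => hb5 (hφ h)) ?_
    rw [mem_span_singleton]
    exact ⟨s4 * ga, by rw [mul_smul, ← he3, ← h4, h0]; module⟩
  -- W17 = span {e1, v7}
  have hW17 : span F ({e1, v7} : Set (Fin 3 → F)) = (ψ l1c).1 := by
    refine span_pair_eq (ψ l1c).2 me1_17 m17_7 ?_
    intro s t h
    have h' : (s + t) • e1 + t • e2 + t • e3 = 0 := by
      rw [he7] at h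
      linear_combination (norm := module) h
    obtain ⟨ha', hb', hc'⟩ := key _ _ _ h'
    exact ⟨by linear_combination ha' - hb', hb'⟩
  obtain ⟨s6, t6, h6⟩ := mem_span_pair.mp (by rw [hW17]; exact m17_6 :
    u6 ∈ span F ({e1, v7} : Set (Fin 3 → F)))
  have ht6 : t6 ≠ 0 := by
    intro h0
    refine pg_not_mem_span hu6 hv1 hu6ne (fun h => hc1 (hφ h)) ?_
    rw [mem_span_singleton]
    exact ⟨s6 * al, by rw [mul_smul, ← he1, ← h6, h0]; module⟩
  -- line l1b : span {e1, u2}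
  have hW124 : span F ({e1, u2} : Set (Fin 3 → F)) = (ψ l1b).1 := by
    refine span_pair_eq (ψ l1b).2 me1_124 m124_2 ?_
    intro s t h
    have h' : s • e1 + (t * s2) • e2 + (t * t2) • e3 = 0 := by
      rw [← h2] at h
      linear_combination (norm := module) h
    obtain ⟨ha', hb', hc'⟩ := key _ _ _ h'
    refine ⟨ha', ?_⟩
    rcases mul_eq_zero.mp hb' with h | h
    · exact h
    · exact absurd h hs2
  obtain ⟨x1, y1, hx1⟩ := mem_span_pair.mp (by rw [hW124]; exact m124_4 :
    u4 ∈ span F ({e1, u2} : Set (Fin 3 → F)))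
  obtain ⟨eA1, eA2, eA3⟩ := key (x1 - t4) (y1 * s2 - t4) (y1 * t2 - (s4 + t4))
    (by linear_combination (norm := module) hx1 - h4 + y1 • h2 + t4 • he7)
  -- line M : span {e2, u6}
  have hWM : span F ({e2, u6} : Set (Fin 3 → F)) = (ψ M).1 := by
    refine span_pair_eq (ψ M).2 me2_M mM_6 ?_
    intro s t h
    have h' : (t * (s6 + t6)) • e1 + (s + t * t6) • e2 + (t * t6) • e3 = 0 := by
      rw [← h6, he7] at h
      linear_combination (norm := module) h
    obtain ⟨ha', hb', hc'⟩ := key _ _ _ h'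
    have ht0 : t = 0 := by
      rcases mul_eq_zero.mp hc' with h | h
      · exact h
      · exact absurd h ht6
    refine ⟨?_, ht0⟩
    linear_combination hb' - t6 * ht0
  obtain ⟨x2, y2, hx2⟩ := mem_span_pair.mp (by rw [hWM]; exact mM_4 :
    u4 ∈ span F ({e2, u6} : Set (Fin 3 → F)))
  obtain ⟨eB1, eB2, eB3⟩ := key (y2 * (s6 + t6) - t4) (x2 + y2 * t6 - t4) (y2 * t6 - (s4 + t4))
    (by linear_combination (norm := module) hx2 - h4 + y2 • h6 + (t4 - y2 * t6) • he7)
  -- line l5c : span {e3, u6}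
  have hW568 : span F ({e3, u6} : Set (Fin 3 → F)) = (ψ l5c).1 := by
    refine span_pair_eq (ψ l5c).2 me3_568 m568_6 ?_
    intro s t h
    have h' : (t * (s6 + t6)) • e1 + (t * t6) • e2 + (s + t * t6) • e3 = 0 := by
      rw [← h6, he7] at h
      linear_combination (norm := module) h
    obtain ⟨ha', hb', hc'⟩ := key _ _ _ h'
    have ht0 : t = 0 := by
      rcases mul_eq_zero.mp hb' with h | h
      · exact h
      · exact absurd h ht6
    refine ⟨?_, ht0⟩
    linear_combination hc' - t6 * ht0
  obtain ⟨x3, y3, hx3⟩ := mem_span_pair.mp (by rw [hW568]; exact m568_8 :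
    u8 ∈ span F ({e3, u6} : Set (Fin 3 → F)))
  obtain ⟨eC1, eC2, eC3⟩ := key (y3 * (s6 + t6) - s8) (y3 * t6 - t8) (x3 + y3 * t6 - 0)
    (by linear_combination (norm := module) hx3 - h8 + y3 • h6 - (y3 * t6) • he7)
  -- line N : span {u2, u8}
  have hWN : span F ({u2, u8} : Set (Fin 3 → F)) = (ψ N).1 := by
    refine span_pair_eq (ψ N).2 mN_2 mN_8 ?_
    intro s t h
    have h' : (t * s8) • e1 + (s * s2 + t * t8) • e2 + (s * t2) • e3 = 0 := by
      rw [← h2, ← h8] at h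
      linear_combination (norm := module) h
    obtain ⟨ha', hb', hc'⟩ := key _ _ _ h'
    have ht0 : t = 0 := by
      rcases mul_eq_zero.mp ha' with h | h
      · exact h
      · exact absurd h hs8
    have hs0 : s = 0 := by
      rcases mul_eq_zero.mp hc' with h | h
      · exact h
      · exact absurd h ht2
    exact ⟨hs0, ht0⟩
  obtain ⟨x4, y4, hx4⟩ := mem_span_pair.mp (by rw [hWN]; exact mN_7 :
    v7 ∈ span F ({u2, u8} : Set (Fin 3 → F)))
  obtain ⟨eD1, eD2, eD3⟩ := key (y4 * s8 - 1) (x4 * s2 + y4 * t8 - 1) (x4 * t2 - 1)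
    (by linear_combination (norm := module) x4 • h2 + y4 • h8 + hx4 + he7)
  -- final algebra
  have hA : s2 * (s4 + t4) = t4 * t2 := by linear_combination t2 * eA2 - s2 * eA3
  have hB : t4 * t6 = (s4 + t4) * (s6 + t6) := by
    linear_combination (s6 + t6) * eB3 - t6 * eB1
  have hC : s8 * t6 = t8 * (s6 + t6) := by
    linear_combination (s6 + t6) * eC2 - t6 * eC1
  have hD : t2 * s8 = s2 * s8 + t2 * t8 := by
    linear_combination s2 * s8 * eD3 + t2 * t8 * eD1 - t2 * s8 * eD2
  have hE : s2 * t6 = t2 * (s6 + t6) := by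
    refine mul_left_cancel₀ ht4 ?_
    linear_combination (s6 + t6) * hA + s2 * hB
  have hFq : s2 * t8 = t2 * s8 := by
    refine mul_left_cancel₀ ht6 ?_
    linear_combination t8 * hE - t2 * hC
  have hP : t2 * s2 = s2 ^ 2 + t2 ^ 2 := by
    refine mul_left_cancel₀ ht8 ?_
    linear_combination t2 * hD + (t2 - s2) * hFq
  refine ⟨t2 / s2, ?_⟩
  field_simp
  linear_combination (-1 : F) * hP


lemma mem3 {α : Type*} {s : Set α} (hs : s.ncard = 3) {x : α} (hx : x ∈ s) :
    ∃ u v, u ≠ x ∧ v ≠ x ∧ u ≠ v ∧ s = {x, u, v} := by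
  obtain ⟨p, q, r, hpq, hpr, hqr, rfl⟩ := Set.ncard_eq_three.mp hs
  rcases hx with rfl | hx
  · exact ⟨q, r, hpq.symm, hpr.symm, hqr, rfl⟩
  · rcases hx with rfl | hx
    · refine ⟨p, r, hpq, hqr.symm, hpr, ?_⟩
      ext t; simp; tauto
    · rw [Set.mem_singleton_iff] at hx; subst hx
      refine ⟨p, q, hpr, hqr, hpq, ?_⟩
      ext t; simp; tauto

lemma mem3' {α : Type*} {s : Set α} (hs : s.ncard = 3) {x y : α} (hx : x ∈ s) (hy : y ∈ s)
    (hxy : x ≠ y) : ∃ w, w ≠ x ∧ w ≠ y ∧ s = {x, y, w} := by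
  obtain ⟨u, v, hux, hvx, huv, rfl⟩ := mem3 hs hx
  rcases hy with rfl | hy
  · exact absurd rfl hxy
  · rcases hy with rfl | hy
    · exact ⟨v, hvx, huv.symm, rfl⟩
    · rw [Set.mem_singleton_iff] at hy; subst hy
      refine ⟨u, hux, huv, ?_⟩
      ext t; simp; tauto

section comb
variable {P L : Type} {R : P → L → Prop}
variable (hpl : ∀ x y : P, x ≠ y → ∀ l m : L, R x l → R y l → R x m → R y m → l = m)
variable (hlns : ∀ x : P, {l | R x l}.ncard = 3)
variable (hpts : ∀ l : L, {y : P | R y l}.ncard = 3)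
variable (hcard : Nat.card P = 8)

include hpl hlns hpts hcard in
lemma antipode [Finite P] (x : P) :
    ∃ y, y ≠ x ∧ ¬(∃ l, R x l ∧ R y l) ∧
      (∀ z, z ≠ x → z ≠ y → ∃ l, R x l ∧ R z l) := by
  classical
  obtain ⟨l1, l2, l3, h12, h13, h23, hL⟩ := Set.ncard_eq_three.mp (hlns x)
  have hx1 : R x l1 := by
    have : l1 ∈ {l | R x l} := by rw [hL]; simp
    exact this
  have hx2 : R x l2 := by
    have : l2 ∈ {l | R x l} := by rw [hL]; simp
    exact this
  have hx3 : R x l3 := by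
    have : l3 ∈ {l | R x l} := by rw [hL]; simp
    exact this
  obtain ⟨a1, b1, ha1x, hb1x, hab1, hS1⟩ := mem3 (hpts l1) hx1
  obtain ⟨a2, b2, ha2x, hb2x, hab2, hS2⟩ := mem3 (hpts l2) hx2
  obtain ⟨a3, b3, ha3x, hb3x, hab3, hS3⟩ := mem3 (hpts l3) hx3
  have hmem : ∀ {l : L} {s : Set P}, {y : P | R y l} = s → ∀ {w : P}, w ∈ s → R w l := by
    intro l s hs w hw
    have : w ∈ {y : P | R y l} := by rw [hs]; exact hw
    exact this
  have hRa1 : R a1 l1 := hmem hS1 (by simp)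
  have hRb1 : R b1 l1 := hmem hS1 (by simp)
  have hRa2 : R a2 l2 := hmem hS2 (by simp)
  have hRb2 : R b2 l2 := hmem hS2 (by simp)
  have hRa3 : R a3 l3 := hmem hS3 (by simp)
  have hRb3 : R b3 l3 := hmem hS3 (by simp)
  -- cross-line distinctness
  have cross : ∀ {l m : L} {u : P}, l ≠ m → R x l → R x m → u ≠ x → R u l → R u m → False := by
    intro l m u hlm hxl hxm hux hul hum
    exact hlm (hpl u x hux l m hul hxl hum hxm)
  have d12 : ∀ {u v : P}, u ≠ x → R u l1 → v ≠ x → R v l2 → u ≠ v := by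
    intro u v hu hul hv hvl he
    exact cross h12 hx1 hx2 hu hul (he ▸ hvl)
  have d13 : ∀ {u v : P}, u ≠ x → R u l1 → v ≠ x → R v l3 → u ≠ v := by
    intro u v hu hul hv hvl he
    exact cross h13 hx1 hx3 hu hul (he ▸ hvl)
  have d23 : ∀ {u v : P}, u ≠ x → R u l2 → v ≠ x → R v l3 → u ≠ v := by
    intro u v hu hul hv hvl he
    exact cross h23 hx2 hx3 hu hul (he ▸ hvl)
  set S : Set P := {x, a1, b1, a2, b2, a3, b3} with hSdef
  have hxa1 : x ≠ a1 := ha1x.symm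
  have hxb1 : x ≠ b1 := hb1x.symm
  have hxa2 : x ≠ a2 := ha2x.symm
  have hxb2 : x ≠ b2 := hb2x.symm
  have hxa3 : x ≠ a3 := ha3x.symm
  have hxb3 : x ≠ b3 := hb3x.symm
  have h1a2 : a1 ≠ a2 := d12 ha1x hRa1 ha2x hRa2
  have h1b2 : a1 ≠ b2 := d12 ha1x hRa1 hb2x hRb2
  have hb1a2 : b1 ≠ a2 := d12 hb1x hRb1 ha2x hRa2
  have hb1b2 : b1 ≠ b2 := d12 hb1x hRb1 hb2x hRb2
  have h1a3 : a1 ≠ a3 := d13 ha1x hRa1 ha3x hRa3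
  have h1b3 : a1 ≠ b3 := d13 ha1x hRa1 hb3x hRb3
  have hb1a3 : b1 ≠ a3 := d13 hb1x hRb1 ha3x hRa3
  have hb1b3 : b1 ≠ b3 := d13 hb1x hRb1 hb3x hRb3
  have h2a3 : a2 ≠ a3 := d23 ha2x hRa2 ha3x hRa3
  have h2b3 : a2 ≠ b3 := d23 ha2x hRa2 hb3x hRb3
  have hb2a3 : b2 ≠ a3 := d23 hb2x hRb2 ha3x hRa3
  have hb2b3 : b2 ≠ b3 := d23 hb2x hRb2 hb3x hRb3
  have hS7 : S.ncard = 7 := by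
    rw [hSdef]
    rw [Set.ncard_insert_of_notMem (by simp [hxa1, hxb1, hxa2, hxb2, hxa3, hxb3])]
    rw [Set.ncard_insert_of_notMem (by simp [hab1, h1a2, h1b2, h1a3, h1b3])]
    rw [Set.ncard_insert_of_notMem (by simp [hb1a2, hb1b2, hb1a3, hb1b3])]
    rw [Set.ncard_insert_of_notMem (by simp [hab2, h2a3, h2b3])]
    rw [Set.ncard_insert_of_notMem (by simp [hb2a3, hb2b3])]
    rw [Set.ncard_insert_of_notMem (by simp [hab3])]
    rw [Set.ncard_singleton]
  set T : Set P := {z | z ≠ x ∧ ¬∃ l, R x l ∧ R z l} with hTdef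
  have hdisj : Disjoint S T := by
    rw [Set.disjoint_left]
    intro z hzS hzT
    obtain ⟨hzx, hzcol⟩ := hzT
    apply hzcol
    rcases hzS with rfl | hz
    · exact absurd rfl hzx
    · rcases hz with rfl | hz
      · exact ⟨l1, hx1, hRa1⟩
      · rcases hz with rfl | hz
        · exact ⟨l1, hx1, hRb1⟩
        · rcases hz with rfl | hz
          · exact ⟨l2, hx2, hRa2⟩
          · rcases hz with rfl | hz
            · exact ⟨l2, hx2, hRb2⟩
            · rcases hz with rfl | hz
              · exact ⟨l3, hx3, hRa3⟩
              · rw [Set.mem_singleton_iff] at hz; subst hz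
                exact ⟨l3, hx3, hRb3⟩
  have hcover : Set.univ = S ∪ T := by
    apply Set.eq_of_subset_of_ncard_le _ _
    · intro z _
      by_cases hzx : z = x
      · left; subst hzx; exact Set.mem_insert _ _
      · by_cases hcol : ∃ l, R x l ∧ R z l
        · left
          obtain ⟨l, hxl, hzl⟩ := hcol
          have : l ∈ {l | R x l} := hxl
          rw [hL] at this
          rcases this with rfl | hlm
          · have : z ∈ {y : P | R y l} := hzl
            rw [hS1] at this
            rcases this with rfl | hz
            · exact absurd rfl hzx
            · rcases hz with rfl | hz
              · simp [hSdef]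
              · rw [Set.mem_singleton_iff] at hz; subst hz; simp [hSdef]
          · rcases hlm with rfl | hlm
            · have : z ∈ {y : P | R y l} := hzl
              rw [hS2] at this
              rcases this with rfl | hz
              · exact absurd rfl hzx
              · rcases hz with rfl | hz
                · simp [hSdef]
                · rw [Set.mem_singleton_iff] at hz; subst hz; simp [hSdef]
            · rw [Set.mem_singleton_iff] at hlm; subst hlm
              have : z ∈ {y : P | R y l} := hzl
              rw [hS3] at this
              rcases this with rfl | hz
              · exact absurd rfl hzx
              · rcases hz with rfl | hz
                · simp [hSdef]
                · rw [Set.mem_singleton_iff] at hz; subst hz; simp [hSdef]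
        · right; exact ⟨hzx, hcol⟩
    · exact Set.ncard_le_ncard (Set.subset_univ _) (Set.toFinite _)
  have hT1 : T.ncard = 1 := by
    have h8 : (Set.univ : Set P).ncard = 8 := by rw [Set.ncard_univ, hcard]
    rw [hcover, Set.ncard_union_eq hdisj] at h8
    omega
  obtain ⟨y, hy⟩ := Set.ncard_eq_one.mp hT1
  have hyT : y ∈ T := by rw [hy]; rfl
  refine ⟨y, hyT.1, hyT.2, ?_⟩
  intro z hzx hzy
  by_contra hcol
  have : z ∈ T := ⟨hzx, hcol⟩
  rw [hy, Set.mem_singleton_iff] at this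
  exact hzy this

end comb

/-- the linear functional with coefficient vector `n` -/
def lf (n : Fin 3 → F) : (Fin 3 → F) →ₗ[F] F where
  toFun v := n 0 * v 0 + n 1 * v 1 + n 2 * v 2
  map_add' := by intros; simp [Pi.add_apply]; ring
  map_smul' := by intros; simp [Pi.smul_apply, smul_eq_mul]; ring

lemma lf_apply (n v : Fin 3 → F) : lf n v = n 0 * v 0 + n 1 * v 1 + n 2 * v 2 := rfl

lemma finrank_ker_lf (n : Fin 3 → F) (hs : ∃ v, lf n v = 1) :
    Module.finrank F (LinearMap.ker (lf (F := F) n)) = 2 := by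
  have hr : LinearMap.range (lf (F := F) n) = ⊤ := by
    rw [LinearMap.range_eq_top]
    intro y
    obtain ⟨v, hv⟩ := hs
    exact ⟨y • v, by rw [map_smul, hv, smul_eq_mul, mul_one]⟩
  have h := LinearMap.finrank_range_add_finrank_ker (lf (F := F) n)
  rw [hr] at h
  simp only [finrank_top, finrank_self] at h
  have h3 : Module.finrank F (Fin 3 → F) = 3 := by simp
  omega

/-- Möbius–Kantor line structure on `Fin 8`. -/
def mkL (j : Fin 8) : Finset (Fin 8) := {j, j + 1, j + 3}

lemma mkL_card : ∀ j : Fin 8, (mkL j).card = 3 := by decide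

lemma mkl_sel_pts : ∀ i i' : Fin 8, i ≠ i' → ∃ j, i ∈ mkL j ∧ i' ∉ mkL j := by decide

lemma mkl_sel_lns : ∀ j j' : Fin 8, j ≠ j' → ∃ i, i ∈ mkL j ∧ i ∉ mkL j' := by decide

def mkPts (c : F) : Fin 8 → (Fin 3 → F) :=
  ![![1,0,0], ![0,1,c], ![0,1,0], ![1,1,c], ![0,0,1], ![1,c,c], ![1,1,1], ![1,c,0]]

def mkNrm (c : F) : Fin 8 → (Fin 3 → F) :=
  ![![0,c,-1], ![1,0,0], ![c,0,-1], ![1,-1,0], ![c,-1,0], ![0,1,-1], ![1-c,c,-1], ![0,0,1]]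

lemma mk_key {c : F} (hc : c ^ 2 - c + 1 = 0) :
    ∀ i j : Fin 8, i ∈ mkL j ↔ lf (mkNrm c j) (mkPts c i) = 0 := by
  intro i j
  fin_cases i <;> fin_cases j
  · refine iff_of_true (by decide) ?_
    show (0:F) * (1:F) + c * (0:F) + (-1:F) * (0:F) = 0
    linear_combination ((0:F))*hc
  · refine iff_of_false (by decide) ?_
    show (1:F) * (1:F) + (0:F) * (0:F) + (0:F) * (0:F) ≠ 0
    intro h0; exact one_ne_zero (α := F) (by linear_combination ((1:F))*h0 + ((0:F))*hc)
  · refine iff_of_false (by decide) ?_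
    show c * (1:F) + (0:F) * (0:F) + (-1:F) * (0:F) ≠ 0
    intro h0; exact one_ne_zero (α := F) (by linear_combination (((1:F)-c))*h0 + ((1:F))*hc)
  · refine iff_of_false (by decide) ?_
    show (1:F) * (1:F) + (-1:F) * (0:F) + (0:F) * (0:F) ≠ 0
    intro h0; exact one_ne_zero (α := F) (by linear_combination ((1:F))*h0 + ((0:F))*hc)
  · refine iff_of_false (by decide) ?_
    show c * (1:F) + (-1:F) * (0:F) + (0:F) * (0:F) ≠ 0
    intro h0; exact one_ne_zero (α := F) (by linear_combination (((1:F)-c))*h0 + ((1:F))*hc)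
  · refine iff_of_true (by decide) ?_
    show (0:F) * (1:F) + (1:F) * (0:F) + (-1:F) * (0:F) = 0
    linear_combination ((0:F))*hc
  · refine iff_of_false (by decide) ?_
    show (1-c) * (1:F) + c * (0:F) + (-1:F) * (0:F) ≠ 0
    intro h0; exact one_ne_zero (α := F) (by linear_combination (c)*h0 + ((1:F))*hc)
  · refine iff_of_true (by decide) ?_
    show (0:F) * (1:F) + (0:F) * (0:F) + (1:F) * (0:F) = 0
    linear_combination ((0:F))*hc
  · refine iff_of_true (by decide) ?_
    show (0:F) * (0:F) + c * (1:F) + (-1:F) * c = 0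
    linear_combination ((0:F))*hc
  · refine iff_of_true (by decide) ?_
    show (1:F) * (0:F) + (0:F) * (1:F) + (0:F) * c = 0
    linear_combination ((0:F))*hc
  · refine iff_of_false (by decide) ?_
    show c * (0:F) + (0:F) * (1:F) + (-1:F) * c ≠ 0
    intro h0; exact one_ne_zero (α := F) (by linear_combination ((c-(1:F)))*h0 + ((1:F))*hc)
  · refine iff_of_false (by decide) ?_
    show (1:F) * (0:F) + (-1:F) * (1:F) + (0:F) * c ≠ 0
    intro h0; exact one_ne_zero (α := F) (by linear_combination ((-1:F))*h0 + ((0:F))*hc)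
  · refine iff_of_false (by decide) ?_
    show c * (0:F) + (-1:F) * (1:F) + (0:F) * c ≠ 0
    intro h0; exact one_ne_zero (α := F) (by linear_combination ((-1:F))*h0 + ((0:F))*hc)
  · refine iff_of_false (by decide) ?_
    show (0:F) * (0:F) + (1:F) * (1:F) + (-1:F) * c ≠ 0
    intro h0; exact one_ne_zero (α := F) (by linear_combination (c)*h0 + ((1:F))*hc)
  · refine iff_of_true (by decide) ?_
    show (1-c) * (0:F) + c * (1:F) + (-1:F) * c = 0
    linear_combination ((0:F))*hc
  · refine iff_of_false (by decide) ?_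
    show (0:F) * (0:F) + (0:F) * (1:F) + (1:F) * c ≠ 0
    intro h0; exact one_ne_zero (α := F) (by linear_combination (((1:F)-c))*h0 + ((1:F))*hc)
  · refine iff_of_false (by decide) ?_
    show (0:F) * (0:F) + c * (1:F) + (-1:F) * (0:F) ≠ 0
    intro h0; exact one_ne_zero (α := F) (by linear_combination (((1:F)-c))*h0 + ((1:F))*hc)
  · refine iff_of_true (by decide) ?_
    show (1:F) * (0:F) + (0:F) * (1:F) + (0:F) * (0:F) = 0
    linear_combination ((0:F))*hc
  · refine iff_of_true (by decide) ?_
    show c * (0:F) + (0:F) * (1:F) + (-1:F) * (0:F) = 0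
    linear_combination ((0:F))*hc
  · refine iff_of_false (by decide) ?_
    show (1:F) * (0:F) + (-1:F) * (1:F) + (0:F) * (0:F) ≠ 0
    intro h0; exact one_ne_zero (α := F) (by linear_combination ((-1:F))*h0 + ((0:F))*hc)
  · refine iff_of_false (by decide) ?_
    show c * (0:F) + (-1:F) * (1:F) + (0:F) * (0:F) ≠ 0
    intro h0; exact one_ne_zero (α := F) (by linear_combination ((-1:F))*h0 + ((0:F))*hc)
  · refine iff_of_false (by decide) ?_
    show (0:F) * (0:F) + (1:F) * (1:F) + (-1:F) * (0:F) ≠ 0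
    intro h0; exact one_ne_zero (α := F) (by linear_combination ((1:F))*h0 + ((0:F))*hc)
  · refine iff_of_false (by decide) ?_
    show (1-c) * (0:F) + c * (1:F) + (-1:F) * (0:F) ≠ 0
    intro h0; exact one_ne_zero (α := F) (by linear_combination (((1:F)-c))*h0 + ((1:F))*hc)
  · refine iff_of_true (by decide) ?_
    show (0:F) * (0:F) + (0:F) * (1:F) + (1:F) * (0:F) = 0
    linear_combination ((0:F))*hc
  · refine iff_of_true (by decide) ?_
    show (0:F) * (1:F) + c * (1:F) + (-1:F) * c = 0
    linear_combination ((0:F))*hc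
  · refine iff_of_false (by decide) ?_
    show (1:F) * (1:F) + (0:F) * (1:F) + (0:F) * c ≠ 0
    intro h0; exact one_ne_zero (α := F) (by linear_combination ((1:F))*h0 + ((0:F))*hc)
  · refine iff_of_true (by decide) ?_
    show c * (1:F) + (0:F) * (1:F) + (-1:F) * c = 0
    linear_combination ((0:F))*hc
  · refine iff_of_true (by decide) ?_
    show (1:F) * (1:F) + (-1:F) * (1:F) + (0:F) * c = 0
    linear_combination ((0:F))*hc
  · refine iff_of_false (by decide) ?_
    show c * (1:F) + (-1:F) * (1:F) + (0:F) * c ≠ 0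
    intro h0; exact one_ne_zero (α := F) (by linear_combination ((-c))*h0 + ((1:F))*hc)
  · refine iff_of_false (by decide) ?_
    show (0:F) * (1:F) + (1:F) * (1:F) + (-1:F) * c ≠ 0
    intro h0; exact one_ne_zero (α := F) (by linear_combination (c)*h0 + ((1:F))*hc)
  · refine iff_of_false (by decide) ?_
    show (1-c) * (1:F) + c * (1:F) + (-1:F) * c ≠ 0
    intro h0; exact one_ne_zero (α := F) (by linear_combination (c)*h0 + ((1:F))*hc)
  · refine iff_of_false (by decide) ?_
    show (0:F) * (1:F) + (0:F) * (1:F) + (1:F) * c ≠ 0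
    intro h0; exact one_ne_zero (α := F) (by linear_combination (((1:F)-c))*h0 + ((1:F))*hc)
  · refine iff_of_false (by decide) ?_
    show (0:F) * (0:F) + c * (0:F) + (-1:F) * (1:F) ≠ 0
    intro h0; exact one_ne_zero (α := F) (by linear_combination ((-1:F))*h0 + ((0:F))*hc)
  · refine iff_of_true (by decide) ?_
    show (1:F) * (0:F) + (0:F) * (0:F) + (0:F) * (1:F) = 0
    linear_combination ((0:F))*hc
  · refine iff_of_false (by decide) ?_
    show c * (0:F) + (0:F) * (0:F) + (-1:F) * (1:F) ≠ 0
    intro h0; exact one_ne_zero (α := F) (by linear_combination ((-1:F))*h0 + ((0:F))*hc)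
  · refine iff_of_true (by decide) ?_
    show (1:F) * (0:F) + (-1:F) * (0:F) + (0:F) * (1:F) = 0
    linear_combination ((0:F))*hc
  · refine iff_of_true (by decide) ?_
    show c * (0:F) + (-1:F) * (0:F) + (0:F) * (1:F) = 0
    linear_combination ((0:F))*hc
  · refine iff_of_false (by decide) ?_
    show (0:F) * (0:F) + (1:F) * (0:F) + (-1:F) * (1:F) ≠ 0
    intro h0; exact one_ne_zero (α := F) (by linear_combination ((-1:F))*h0 + ((0:F))*hc)
  · refine iff_of_false (by decide) ?_
    show (1-c) * (0:F) + c * (0:F) + (-1:F) * (1:F) ≠ 0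
    intro h0; exact one_ne_zero (α := F) (by linear_combination ((-1:F))*h0 + ((0:F))*hc)
  · refine iff_of_false (by decide) ?_
    show (0:F) * (0:F) + (0:F) * (0:F) + (1:F) * (1:F) ≠ 0
    intro h0; exact one_ne_zero (α := F) (by linear_combination ((1:F))*h0 + ((0:F))*hc)
  · refine iff_of_false (by decide) ?_
    show (0:F) * (1:F) + c * c + (-1:F) * c ≠ 0
    intro h0; exact one_ne_zero (α := F) (by linear_combination ((-1:F))*h0 + ((1:F))*hc)
  · refine iff_of_false (by decide) ?_
    show (1:F) * (1:F) + (0:F) * c + (0:F) * c ≠ 0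
    intro h0; exact one_ne_zero (α := F) (by linear_combination ((1:F))*h0 + ((0:F))*hc)
  · refine iff_of_true (by decide) ?_
    show c * (1:F) + (0:F) * c + (-1:F) * c = 0
    linear_combination ((0:F))*hc
  · refine iff_of_false (by decide) ?_
    show (1:F) * (1:F) + (-1:F) * c + (0:F) * c ≠ 0
    intro h0; exact one_ne_zero (α := F) (by linear_combination (c)*h0 + ((1:F))*hc)
  · refine iff_of_true (by decide) ?_
    show c * (1:F) + (-1:F) * c + (0:F) * c = 0
    linear_combination ((0:F))*hc
  · refine iff_of_true (by decide) ?_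
    show (0:F) * (1:F) + (1:F) * c + (-1:F) * c = 0
    linear_combination ((0:F))*hc
  · refine iff_of_false (by decide) ?_
    show (1-c) * (1:F) + c * c + (-1:F) * c ≠ 0
    intro h0; exact one_ne_zero (α := F) (by linear_combination ((c-(1:F)))*h0 + ((2:F) + (-1:F)*c)*hc)
  · refine iff_of_false (by decide) ?_
    show (0:F) * (1:F) + (0:F) * c + (1:F) * c ≠ 0
    intro h0; exact one_ne_zero (α := F) (by linear_combination (((1:F)-c))*h0 + ((1:F))*hc)
  · refine iff_of_false (by decide) ?_
    show (0:F) * (1:F) + c * (1:F) + (-1:F) * (1:F) ≠ 0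
    intro h0; exact one_ne_zero (α := F) (by linear_combination ((-c))*h0 + ((1:F))*hc)
  · refine iff_of_false (by decide) ?_
    show (1:F) * (1:F) + (0:F) * (1:F) + (0:F) * (1:F) ≠ 0
    intro h0; exact one_ne_zero (α := F) (by linear_combination ((1:F))*h0 + ((0:F))*hc)
  · refine iff_of_false (by decide) ?_
    show c * (1:F) + (0:F) * (1:F) + (-1:F) * (1:F) ≠ 0
    intro h0; exact one_ne_zero (α := F) (by linear_combination ((-c))*h0 + ((1:F))*hc)
  · refine iff_of_true (by decide) ?_
    show (1:F) * (1:F) + (-1:F) * (1:F) + (0:F) * (1:F) = 0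
    linear_combination ((0:F))*hc
  · refine iff_of_false (by decide) ?_
    show c * (1:F) + (-1:F) * (1:F) + (0:F) * (1:F) ≠ 0
    intro h0; exact one_ne_zero (α := F) (by linear_combination ((-c))*h0 + ((1:F))*hc)
  · refine iff_of_true (by decide) ?_
    show (0:F) * (1:F) + (1:F) * (1:F) + (-1:F) * (1:F) = 0
    linear_combination ((0:F))*hc
  · refine iff_of_true (by decide) ?_
    show (1-c) * (1:F) + c * (1:F) + (-1:F) * (1:F) = 0
    linear_combination ((0:F))*hc
  · refine iff_of_false (by decide) ?_
    show (0:F) * (1:F) + (0:F) * (1:F) + (1:F) * (1:F) ≠ 0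
    intro h0; exact one_ne_zero (α := F) (by linear_combination ((1:F))*h0 + ((0:F))*hc)
  · refine iff_of_false (by decide) ?_
    show (0:F) * (1:F) + c * c + (-1:F) * (0:F) ≠ 0
    intro h0; exact one_ne_zero (α := F) (by linear_combination ((-c))*h0 + ((1:F) + (1:F)*c)*hc)
  · refine iff_of_false (by decide) ?_
    show (1:F) * (1:F) + (0:F) * c + (0:F) * (0:F) ≠ 0
    intro h0; exact one_ne_zero (α := F) (by linear_combination ((1:F))*h0 + ((0:F))*hc)
  · refine iff_of_false (by decide) ?_
    show c * (1:F) + (0:F) * c + (-1:F) * (0:F) ≠ 0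
    intro h0; exact one_ne_zero (α := F) (by linear_combination (((1:F)-c))*h0 + ((1:F))*hc)
  · refine iff_of_false (by decide) ?_
    show (1:F) * (1:F) + (-1:F) * c + (0:F) * (0:F) ≠ 0
    intro h0; exact one_ne_zero (α := F) (by linear_combination (c)*h0 + ((1:F))*hc)
  · refine iff_of_true (by decide) ?_
    show c * (1:F) + (-1:F) * c + (0:F) * (0:F) = 0
    linear_combination ((0:F))*hc
  · refine iff_of_false (by decide) ?_
    show (0:F) * (1:F) + (1:F) * c + (-1:F) * (0:F) ≠ 0
    intro h0; exact one_ne_zero (α := F) (by linear_combination (((1:F)-c))*h0 + ((1:F))*hc)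
  · refine iff_of_true (by decide) ?_
    show (1-c) * (1:F) + c * c + (-1:F) * (0:F) = 0
    linear_combination ((1:F))*hc
  · refine iff_of_true (by decide) ?_
    show (0:F) * (1:F) + (0:F) * c + (1:F) * (0:F) = 0
    linear_combination ((0:F))*hc


lemma mkPts_ne_zero (c : F) : ∀ i, mkPts c i ≠ 0 := by
  intro i hi
  fin_cases i
  · exact one_ne_zero (α := F) (congrFun hi 0)
  · exact one_ne_zero (α := F) (congrFun hi 1)
  · exact one_ne_zero (α := F) (congrFun hi 1)
  · exact one_ne_zero (α := F) (congrFun hi 0)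
  · exact one_ne_zero (α := F) (congrFun hi 2)
  · exact one_ne_zero (α := F) (congrFun hi 0)
  · exact one_ne_zero (α := F) (congrFun hi 0)
  · exact one_ne_zero (α := F) (congrFun hi 0)

lemma mkNrm_hits_one (c : F) : ∀ j, ∃ v, lf (mkNrm c j) v = 1 := by
  intro j
  fin_cases j
  · exact ⟨(![0,0,-1] : Fin 3 → F), by show (0:F)*0 + c*0 + (-1:F)*(-1) = 1; ring⟩
  · exact ⟨(![1,0,0] : Fin 3 → F), by show (1:F)*1 + (0:F)*0 + (0:F)*0 = 1; ring⟩
  · exact ⟨(![0,0,-1] : Fin 3 → F), by show c*(0:F) + (0:F)*0 + (-1:F)*(-1) = 1; ring⟩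
  · exact ⟨(![1,0,0] : Fin 3 → F), by show (1:F)*1 + (-1:F)*0 + (0:F)*0 = 1; ring⟩
  · exact ⟨(![0,-1,0] : Fin 3 → F), by show c*(0:F) + (-1:F)*(-1) + (0:F)*0 = 1; ring⟩
  · exact ⟨(![0,1,0] : Fin 3 → F), by show (0:F)*0 + (1:F)*1 + (-1:F)*0 = 1; ring⟩
  · exact ⟨(![0,0,-1] : Fin 3 → F), by show (1-c)*(0:F) + c*0 + (-1:F)*(-1) = 1; ring⟩
  · exact ⟨(![0,0,1] : Fin 3 → F), by show (0:F)*0 + (0:F)*0 + (1:F)*1 = 1; ring⟩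

lemma backward_dir {c : F} (hc : c ^ 2 - c + 1 = 0) :
    ∃ (P L : Type) (R : P → L → Prop),
      IsAntipodalPlane 2 R ∧ HasEmbedding R (PGIncidence F) := by
  classical
  refine ⟨Fin 8, Fin 8, fun i j => i ∈ mkL j, ?_, ?_⟩
  · constructor
    · intro l
      have : {x | x ∈ mkL l} = (↑(mkL l) : Set (Fin 8)) := rfl
      rw [this, Set.ncard_coe_finset, mkL_card]
      norm_num
    · decide
    · simp
    · simp
    · intro l
      have : {x | x ∈ mkL l} = (↑(mkL l) : Set (Fin 8)) := rfl
      rw [this, Set.ncard_coe_finset, mkL_card]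
    · intro x
      rw [Set.ncard_eq_toFinset_card', Set.toFinset_setOf]
      revert x; decide
  · -- the embedding
    refine ⟨fun i => ⟨Submodule.span F {mkPts c i}, finrank_span_singleton (mkPts_ne_zero c i)⟩,
        fun j => ⟨LinearMap.ker (lf (mkNrm c j)), finrank_ker_lf _ (mkNrm_hits_one c j)⟩,
        ?_, ?_, ?_⟩
    · intro i i' hii'
      by_contra hne
      obtain ⟨j, hj1, hj2⟩ := mkl_sel_pts i i' hne
      have h1 : lf (mkNrm c j) (mkPts c i) = 0 := (mk_key hc i j).mp hj1
      have h2 : lf (mkNrm c j) (mkPts c i') ≠ 0 := fun h => hj2 ((mk_key hc i' j).mpr h)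
      apply h2
      have hmem : mkPts c i' ∈ Submodule.span F {mkPts c i} := by
        have := congrArg Subtype.val hii'
        simp only at this
        rw [this]
        exact Submodule.mem_span_singleton_self _
      obtain ⟨a, ha⟩ := Submodule.mem_span_singleton.mp hmem
      rw [← ha, map_smul, h1, smul_eq_mul, mul_zero]
    · intro j j' hjj'
      by_contra hne
      obtain ⟨i, hi1, hi2⟩ := mkl_sel_lns j j' hne
      have h1 : lf (mkNrm c j) (mkPts c i) = 0 := (mk_key hc i j).mp hi1
      have h2 : lf (mkNrm c j') (mkPts c i) ≠ 0 := fun h => hi2 ((mk_key hc i j').mpr h)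
      have := congrArg Subtype.val hjj'
      simp only at this
      exact h2 (by rw [← LinearMap.mem_ker, ← this, LinearMap.mem_ker]; exact h1)
    · intro i j
      have h := mk_key hc i j
      constructor
      · intro hm
        exact (Submodule.span_singleton_le_iff_mem _ _).mpr (LinearMap.mem_ker.mpr (h.mp hm))
      · intro hinc
        exact h.mpr (LinearMap.mem_ker.mp ((Submodule.span_singleton_le_iff_mem _ _).mp hinc))

variable [Fintype F]


lemma char_three_of_card {q n : ℕ} (hF : Fintype.card F = q) (hq : q = 3 ^ n) :
    (3 : F) = 0 := by
  obtain ⟨m, hprime, hcard⟩ := FiniteField.card F (ringChar F)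
  have hdvd3 : ringChar F ∣ 3 := by
    have h1 : ringChar F ∣ 3 ^ n := by
      rw [← hq, ← hF, hcard]
      exact dvd_pow_self _ (by positivity)
    exact hprime.dvd_of_dvd_pow h1
  have h3 : ringChar F = 3 := by
    rcases (Nat.Prime.eq_one_or_self_of_dvd (by norm_num) _ hdvd3) with h | h
    · exact absurd h hprime.ne_one
    · exact h
  haveI : CharP F 3 := ringChar.of_eq h3
  exact CharP.cast_eq_zero F 3

lemma root_exists_of_cond {q : ℕ} (hF : Fintype.card F = q)
    (h : (∃ h : ℕ, q = 3 ^ h) ∨ q % 3 = 1) : ∃ c : F, c ^ 2 - c + 1 = 0 := by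
  classical
  rcases h with ⟨n, hq⟩ | hq
  · exact ⟨-1, by linear_combination char_three_of_card hF hq⟩
  · have hcardu : Fintype.card Fˣ = q - 1 := by rw [Fintype.card_units, hF]
    have hq2 : 2 ≤ q := hF ▸ Fintype.one_lt_card
    have hdvd : 3 ∣ Fintype.card Fˣ := by rw [hcardu]; omega
    haveI : Fact (Nat.Prime 3) := ⟨by norm_num⟩
    obtain ⟨u, hu⟩ := exists_prime_orderOf_dvd_card 3 hdvd
    have hu3 : u ^ 3 = 1 := by rw [← hu]; exact pow_orderOf_eq_one u
    have hune : u ≠ 1 := by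
      intro h1; rw [h1, orderOf_one] at hu; norm_num at hu
    set t : F := (u : F) with ht
    have ht3 : t ^ 3 = 1 := by rw [ht, ← Units.val_pow_eq_pow_val, hu3, Units.val_one]
    have htne : t ≠ 1 := fun h => hune (Units.ext h)
    have hroot : t ^ 2 + t + 1 = 0 := by
      have hfact : (t - 1) * (t ^ 2 + t + 1) = 0 := by linear_combination ht3
      rcases mul_eq_zero.mp hfact with h | h
      · exact absurd (sub_eq_zero.mp h) htne
      · exact h
    exact ⟨-t, by linear_combination hroot⟩

lemma cond_of_root {q : ℕ} (hF : Fintype.card F = q) {c : F} (hc : c ^ 2 - c + 1 = 0) :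
    (∃ h : ℕ, q = 3 ^ h) ∨ q % 3 = 1 := by
  classical
  set t : F := -c with ht
  have hroot : t ^ 2 + t + 1 = 0 := by rw [ht]; linear_combination hc
  have ht3 : t ^ 3 = 1 := by linear_combination (t - 1) * hroot
  by_cases ht1 : t = 1
  · have h30 : (3 : F) = 0 := by rw [ht1] at hroot; linear_combination hroot
    left
    obtain ⟨m, hprime, hcard⟩ := FiniteField.card F (ringChar F)
    have hdvd : ringChar F ∣ 3 := ringChar.dvd (by exact_mod_cast h30)
    have h3 : ringChar F = 3 := by
      rcases (Nat.Prime.eq_one_or_self_of_dvd (by norm_num) _ hdvd) with h | h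
      · exact absurd h hprime.ne_one
      · exact h
    exact ⟨m, by rw [← hF, hcard, h3]⟩
  · right
    have htne0 : t ≠ 0 := by intro h; rw [h] at hroot; simp at hroot
    set u : Fˣ := Units.mk0 t htne0 with hu
    have hu3 : u ^ 3 = 1 := by ext; rw [Units.val_pow_eq_pow_val]; exact ht3
    have hune1 : u ≠ 1 := by
      intro h1
      apply ht1
      have := congrArg Units.val h1
      simpa [hu] using this
    have horder : orderOf u = 3 := by
      have hdvd := orderOf_dvd_of_pow_eq_one hu3
      rcases (Nat.Prime.eq_one_or_self_of_dvd (by norm_num) _ hdvd) with h | h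
      · exact absurd (orderOf_eq_one_iff.mp h) hune1
      · exact h
    have hdvdcard : 3 ∣ Fintype.card Fˣ := horder ▸ orderOf_dvd_card
    have hcardu : Fintype.card Fˣ = q - 1 := by rw [Fintype.card_units, hF]
    have hq2 : 2 ≤ q := hF ▸ Fintype.one_lt_card
    rw [hcardu] at hdvdcard
    omega


lemma forward_dir {F : Type} [Field F] {P L : Type} {R : P → L → Prop}
    (h : IsAntipodalPlane 2 R) (hE : HasEmbedding R (PGIncidence F)) :
    ∃ z : F, z ^ 2 - z + 1 = 0 := by
  classical
  obtain ⟨φ, ψ, hφ, hψ, hiff⟩ := hE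
  have hP8 : Nat.card P = 8 := by have := h.card_points; norm_num at this; exact this
  haveI hfinP : Finite P := (Nat.card_pos_iff.mp (by omega)).2
  haveI hneP : Nonempty P := (Nat.card_pos_iff.mp (by omega)).1
  have hpl := h.partial_linear
  have hpts : ∀ l, {y : P | R y l}.ncard = 3 := fun l => by
    have := h.line_card l; norm_num at this; exact this
  have hlns : ∀ x : P, {l : L | R x l}.ncard = 3 := fun x => by
    have := h.point_card x; norm_num at this; exact this
  have hant := antipode hpl hlns hpts hP8
  have hmem : ∀ {l : L} {s : Set P}, {y : P | R y l} = s → ∀ {w : P}, w ∈ s → R w l := by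
    intro l s hs w hw
    have : w ∈ {y : P | R y l} := by rw [hs]; exact hw
    exact this
  have hnotmem : ∀ {l : L} {s : Set P}, {y : P | R y l} = s → ∀ {w : P}, w ∉ s → ¬R w l := by
    intro l s hs w hw hR
    exact hw (by rw [← hs]; exact hR)
  obtain ⟨p1⟩ := hneP
  obtain ⟨p5, h51, hnc15, hcol1⟩ := hant p1
  have h15 : p1 ≠ p5 := h51.symm
  -- the antipode of p5 is p1
  obtain ⟨w0, hw05, hncw0, hcol5⟩ := hant p5
  have hw01 : w0 = p1 := by
    by_contra hne
    obtain ⟨l, h5l, h1l⟩ := hcol5 p1 h15 (fun he => hne he.symm)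
    exact hnc15 ⟨l, h1l, h5l⟩
  obtain rfl := hw01.symm
  -- a point distinct from p1 p5
  have hex : ∃ a : P, a ≠ p1 ∧ a ≠ p5 := by
    by_contra hno
    push_neg at hno
    have hsub : (Set.univ : Set P) ⊆ {p1, p5} := by
      intro z _
      by_cases hz : z = p1
      · simp [hz]
      · simp [hno z hz]
    have h2 : (Set.univ : Set P).ncard ≤ 2 := by
      refine le_trans (Set.ncard_le_ncard hsub (Set.toFinite _)) ?_
      refine le_trans (Set.ncard_insert_le _ _) ?_
      simp
    rw [Set.ncard_univ, hP8] at h2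
    omega
  obtain ⟨qa, ha1, ha5⟩ := hex
  -- third line of a point off p1, p5
  have third : ∀ x : P, x ≠ p1 → x ≠ p5 → ∃ (lx1 lx5 Mx : L), R x lx1 ∧ R p1 lx1 ∧
      R x lx5 ∧ R p5 lx5 ∧ R x Mx ∧ ¬R p1 Mx ∧ ¬R p5 Mx ∧
      (∀ l, R x l → l = lx1 ∨ l = lx5 ∨ l = Mx) := by
    intro x hx1 hx5
    obtain ⟨l1', h1l, hxl⟩ := hcol1 x hx1 hx5
    obtain ⟨l5', h5l, hxl5⟩ := hcol5 x hx5 hx1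
    have hne : l1' ≠ l5' := fun he => hnc15 ⟨l1', h1l, he ▸ h5l⟩
    obtain ⟨Mx, hM1, hM5, hMeq⟩ := mem3' (hlns x) (show l1' ∈ {l : L | R x l} from hxl)
      (show l5' ∈ {l : L | R x l} from hxl5) hne
    have hxM : R x Mx := by
      have : Mx ∈ {l : L | R x l} := by rw [hMeq]; simp
      exact this
    have hnp1 : ¬R p1 Mx := fun hp => hM1 (hpl x p1 hx1 Mx l1' hxM hp hxl h1l)
    have hnp5 : ¬R p5 Mx := fun hp => hM5 (hpl x p5 hx5 Mx l5' hxM hp hxl5 h5l)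
    refine ⟨l1', l5', Mx, hxl, h1l, hxl5, h5l, hxM, hnp1, hnp5, ?_⟩
    intro l hl
    have : l ∈ {l : L | R x l} := hl
    rw [hMeq] at this
    simpa using this
  obtain ⟨la1, la5, M, hala1, h1la1, hala5, h5la5, haM, hn1M, hn5M, honly_a⟩ := third qa ha1 ha5
  -- points of M
  obtain ⟨qb, qc, hba, hca, hbc, hMS⟩ := mem3 (hpts M) haM
  have hRbM : R qb M := hmem hMS (by simp)
  have hRcM : R qc M := hmem hMS (by simp)
  have hb1 : qb ≠ p1 := fun he => hn1M (he ▸ hRbM)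
  have hb5 : qb ≠ p5 := fun he => hn5M (he ▸ hRbM)
  have hc1 : qc ≠ p1 := fun he => hn1M (he ▸ hRcM)
  have hc5 : qc ≠ p5 := fun he => hn5M (he ▸ hRcM)
  -- antipodes of a b c
  obtain ⟨qA, hAa', hncA, hcolA⟩ := hant qa
  obtain ⟨qB, hBb', hncB, hcolB⟩ := hant qb
  obtain ⟨qC, hCc', hncC, hcolC⟩ := hant qc
  have hA1 : qA ≠ p1 := by
    intro he
    obtain ⟨l, h1l, hal⟩ := hcol1 qa ha1 ha5
    exact hncA ⟨l, hal, he ▸ h1l⟩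
  have hA5 : qA ≠ p5 := by
    intro he
    obtain ⟨l, h5l, hal⟩ := hcol5 qa ha5 ha1
    exact hncA ⟨l, hal, he ▸ h5l⟩
  have hB1 : qB ≠ p1 := by
    intro he
    obtain ⟨l, h1l, hbl⟩ := hcol1 qb hb1 hb5
    exact hncB ⟨l, hbl, he ▸ h1l⟩
  have hB5 : qB ≠ p5 := by
    intro he
    obtain ⟨l, h5l, hbl⟩ := hcol5 qb hb5 hb1
    exact hncB ⟨l, hbl, he ▸ h5l⟩
  have hC1 : qC ≠ p1 := by
    intro he
    obtain ⟨l, h1l, hcl⟩ := hcol1 qc hc1 hc5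
    exact hncC ⟨l, hcl, he ▸ h1l⟩
  have hC5 : qC ≠ p5 := by
    intro he
    obtain ⟨l, h5l, hcl⟩ := hcol5 qc hc5 hc1
    exact hncC ⟨l, hcl, he ▸ h5l⟩
  have hAb : qA ≠ qb := fun he => hncA ⟨M, haM, he ▸ hRbM⟩
  have hAc : qA ≠ qc := fun he => hncA ⟨M, haM, he ▸ hRcM⟩
  have hBa : qB ≠ qa := fun he => hncB ⟨M, hRbM, he ▸ haM⟩
  have hBc : qB ≠ qc := fun he => hncB ⟨M, hRbM, he ▸ hRcM⟩
  have hCa : qC ≠ qa := fun he => hncC ⟨M, hRcM, he ▸ haM⟩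
  have hCb : qC ≠ qb := fun he => hncC ⟨M, hRcM, he ▸ hRbM⟩
  -- antipodes pairwise distinct
  have hAB : qA ≠ qB := by
    intro he
    obtain ⟨y, hy, hncy, hcoly⟩ := hant qA
    have h1 : qa = y := by
      by_contra hne
      obtain ⟨l, hAl, hal⟩ := hcoly qa (fun hh => hAa' hh.symm) hne
      exact hncA ⟨l, hal, hAl⟩
    have h2 : qb = y := by
      by_contra hne
      obtain ⟨l, hAl, hbl⟩ := hcoly qb hAb.symm hne
      exact hncB ⟨l, hbl, he ▸ hAl⟩
    exact hba (h2.trans h1.symm)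
  have hAC : qA ≠ qC := by
    intro he
    obtain ⟨y, hy, hncy, hcoly⟩ := hant qA
    have h1 : qa = y := by
      by_contra hne
      obtain ⟨l, hAl, hal⟩ := hcoly qa (fun hh => hAa' hh.symm) hne
      exact hncA ⟨l, hal, hAl⟩
    have h2 : qc = y := by
      by_contra hne
      obtain ⟨l, hAl, hcl⟩ := hcoly qc hAc.symm hne
      exact hncC ⟨l, hcl, he ▸ hAl⟩
    exact hca (h2.trans h1.symm)
  have hBC : qB ≠ qC := by
    intro he
    obtain ⟨y, hy, hncy, hcoly⟩ := hant qB
    have h1 : qb = y := by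
      by_contra hne
      obtain ⟨l, hBl, hbl⟩ := hcoly qb (fun hh => hBb' hh.symm) hne
      exact hncB ⟨l, hbl, hBl⟩
    have h2 : qc = y := by
      by_contra hne
      obtain ⟨l, hBl, hcl⟩ := hcoly qc hBc.symm hne
      exact hncC ⟨l, hcl, he ▸ hBl⟩
    exact hbc (h1.trans h2.symm)
  -- totality : the eight points are everything
  have hU8 : ({p1, p5, qa, qb, qc, qA, qB, qC} : Set P).ncard = 8 := by
    rw [Set.ncard_insert_of_notMem (by simp [h15, ha1.symm, hb1.symm, hc1.symm,
      hA1.symm, hB1.symm, hC1.symm] : p1 ∉ _)]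
    rw [Set.ncard_insert_of_notMem (by simp [ha5.symm, hb5.symm, hc5.symm,
      hA5.symm, hB5.symm, hC5.symm] : p5 ∉ _)]
    rw [Set.ncard_insert_of_notMem (by simp [hba.symm, hca.symm, hAa'.symm,
      hBa.symm, hCa.symm] : qa ∉ _)]
    rw [Set.ncard_insert_of_notMem (by simp [hbc, hAb.symm, hBb'.symm, hCb.symm] : qb ∉ _)]
    rw [Set.ncard_insert_of_notMem (by simp [hAc.symm, hBc.symm, hCc'.symm] : qc ∉ _)]
    rw [Set.ncard_insert_of_notMem (by simp [hAB, hAC] : qA ∉ _)]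
    rw [Set.ncard_insert_of_notMem (by simp [hBC] : qB ∉ _)]
    rw [Set.ncard_singleton]
  have htot : ∀ z : P, z ∈ ({p1, p5, qa, qb, qc, qA, qB, qC} : Set P) := by
    have : ({p1, p5, qa, qb, qc, qA, qB, qC} : Set P) = Set.univ := by
      apply Set.eq_of_subset_of_ncard_le (Set.subset_univ _)
      rw [Set.ncard_univ, hP8, hU8]
    intro z
    rw [this]
    trivial
  -- third lines of b, c and the line N through qA
  obtain ⟨lb1, lb5, Mb, hblb1, h1lb1, hblb5, h5lb5, hbMb, hn1Mb, hn5Mb, honly_b⟩ :=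
    third qb hb1 hb5
  obtain ⟨lc1, lc5, Mc, hclc1, h1lc1, hclc5, h5lc5, hcMc, hn1Mc, hn5Mc, honly_c⟩ :=
    third qc hc1 hc5
  have hMb : Mb = M := by
    rcases honly_b M hRbM with he | he | he
    · exact absurd (he ▸ h1lb1 : R p1 M) hn1M
    · exact absurd (he ▸ h5lb5 : R p5 M) hn5M
    · exact he.symm
  have hMc : Mc = M := by
    rcases honly_c M hRcM with he | he | he
    · exact absurd (he ▸ h1lc1 : R p1 M) hn1M
    · exact absurd (he ▸ h5lc5 : R p5 M) hn5M
    · exact he.symm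
  rw [hMb] at honly_b
  rw [hMc] at honly_c
  obtain ⟨lA1, lA5, N, hAlA1, h1lA1, hAlA5, h5lA5, hAN, hn1N, hn5N, honly_A⟩ :=
    third qA hA1 hA5
  have hnAM : ¬R qA M := hnotmem hMS (by simp [hAa', hAb, hAc])
  have hNM : N ≠ M := fun he => hnAM (he ▸ hAN)
  -- points of N are the three antipodes
  have hNS : {y : P | R y N} = {qA, qB, qC} := by
    obtain ⟨u, v, huA, hvA, huv, hNS0⟩ := mem3 (hpts N) hAN
    have hRuN : R u N := hmem hNS0 (by simp)
    have hRvN : R v N := hmem hNS0 (by simp)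
    have hexcl : ∀ t : P, R t N → t ≠ qA → t = qB ∨ t = qC := by
      intro t htN htA
      have ht1 : t ≠ p1 := fun he => hn1N (he ▸ htN)
      have ht5 : t ≠ p5 := fun he => hn5N (he ▸ htN)
      have hta : t ≠ qa := fun he => hncA ⟨N, he ▸ htN, hAN⟩
      have htb : t ≠ qb := by
        intro he
        rcases honly_b N (he ▸ htN) with hh | hh | hh
        · exact hn1N (hh ▸ h1lb1)
        · exact hn5N (hh ▸ h5lb5)
        · exact hNM hh
      have htc : t ≠ qc := by
        intro he
        rcases honly_c N (he ▸ htN) with hh | hh | hh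
        · exact hn1N (hh ▸ h1lc1)
        · exact hn5N (hh ▸ h5lc5)
        · exact hNM hh
      have := htot t
      simp only [Set.mem_insert_iff, Set.mem_singleton_iff] at this
      tauto
    rcases hexcl u hRuN huA with rfl | rfl <;> rcases hexcl v hRvN hvA with rfl | rfl
    · exact absurd rfl huv
    · exact hNS0
    · rw [hNS0]; ext t; simp; tauto
    · exact absurd rfl huv
  have hRBN : R qB N := hmem hNS (by simp)
  have hRCN : R qC N := hmem hNS (by simp)
  -- third point on each joining line
  have hjoin : ∀ (x : P) (lx1 : L), R x lx1 → R p1 lx1 → x ≠ p1 → x ≠ p5 → R x M →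
      ∃ w, w ≠ p1 ∧ w ≠ x ∧ w ≠ p5 ∧ {y : P | R y lx1} = {p1, x, w} ∧ R w lx1 := by
    intro x lx1 hx hp1 hx1 hx5 hxM
    obtain ⟨w, hw1, hwx, hSw⟩ := mem3' (hpts lx1) (show p1 ∈ {y : P | R y lx1} from hp1)
      (show x ∈ {y : P | R y lx1} from hx) hx1.symm
    have hRw : R w lx1 := hmem hSw (by simp)
    have hw5 : w ≠ p5 := fun he => hnc15 ⟨lx1, hp1, he ▸ hRw⟩
    exact ⟨w, hw1, hwx, hw5, hSw, hRw⟩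
  -- two points of M on a line through p1 (resp p5) is impossible
  have hMj1 : ∀ (x y : P) (l : L), R x l → R y l → x ≠ y → R x M → R y M → R p1 l → False := by
    intro x y l hx hy hxy hxM hyM hp
    exact hn1M (hpl x y hxy l M hx hy hxM hyM ▸ hp)
  have hMj5 : ∀ (x y : P) (l : L), R x l → R y l → x ≠ y → R x M → R y M → R p5 l → False := by
    intro x y l hx hy hxy hxM hyM hp
    exact hn5M (hpl x y hxy l M hx hy hxM hyM ▸ hp)
  have hjoin5 : ∀ (x : P) (lx5 : L), R x lx5 → R p5 lx5 → x ≠ p1 → x ≠ p5 →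
      ∃ w, w ≠ p5 ∧ w ≠ x ∧ w ≠ p1 ∧ {y : P | R y lx5} = {p5, x, w} ∧ R w lx5 := by
    intro x lx5 hx hp5 hx1 hx5
    obtain ⟨w, hw5, hwx, hSw⟩ := mem3' (hpts lx5) (show p5 ∈ {y : P | R y lx5} from hp5)
      (show x ∈ {y : P | R y lx5} from hx) hx5.symm
    have hRw : R w lx5 := hmem hSw (by simp)
    have hw1 : w ≠ p1 := fun he => hnc15 ⟨lx5, he ▸ hRw, hp5⟩
    exact ⟨w, hw5, hwx, hw1, hSw, hRw⟩
  -- third points of the three p1-lines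
  obtain ⟨wa, hwa1, hwaa, hwa5, hSla1, hRwa⟩ := hjoin qa la1 hala1 h1la1 ha1 ha5 haM
  obtain ⟨wb, hwb1, hwbb, hwb5, hSlb1, hRwb⟩ := hjoin qb lb1 hblb1 h1lb1 hb1 hb5 hRbM
  obtain ⟨wc, hwc1, hwcc, hwc5, hSlc1, hRwc⟩ := hjoin qc lc1 hclc1 h1lc1 hc1 hc5 hRcM
  have hwaA : wa ≠ qA := fun he => hncA ⟨la1, hala1, he ▸ hRwa⟩
  have hwbB : wb ≠ qB := fun he => hncB ⟨lb1, hblb1, he ▸ hRwb⟩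
  have hwcC : wc ≠ qC := fun he => hncC ⟨lc1, hclc1, he ▸ hRwc⟩
  have hwab : wa ≠ qb := fun he => hMj1 qa wa la1 hala1 hRwa hwaa.symm haM (by rw [he]; exact hRbM) h1la1
  have hwac : wa ≠ qc := fun he => hMj1 qa wa la1 hala1 hRwa hwaa.symm haM (by rw [he]; exact hRcM) h1la1
  have hwba : wb ≠ qa := fun he => hMj1 qb wb lb1 hblb1 hRwb hwbb.symm hRbM (by rw [he]; exact haM) h1lb1
  have hwbc : wb ≠ qc := fun he => hMj1 qb wb lb1 hblb1 hRwb hwbb.symm hRbM (by rw [he]; exact hRcM) h1lb1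
  have hwca : wc ≠ qa := fun he => hMj1 qc wc lc1 hclc1 hRwc hwcc.symm hRcM (by rw [he]; exact haM) h1lc1
  have hwcb : wc ≠ qb := fun he => hMj1 qc wc lc1 hclc1 hRwc hwcc.symm hRcM (by rw [he]; exact hRbM) h1lc1
  have hwaBC : wa = qB ∨ wa = qC := by
    have := htot wa
    simp only [Set.mem_insert_iff, Set.mem_singleton_iff] at this
    rcases this with h|h|h|h|h|h|h|h <;> first
      | (exact absurd h hwa1) | (exact absurd h hwa5) | (exact absurd h hwaa)
      | (exact absurd h hwab) | (exact absurd h hwac) | (exact absurd h hwaA)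
      | (exact Or.inl h) | (exact Or.inr h)
  have hwbAC : wb = qA ∨ wb = qC := by
    have := htot wb
    simp only [Set.mem_insert_iff, Set.mem_singleton_iff] at this
    rcases this with h|h|h|h|h|h|h|h <;> first
      | (exact absurd h hwb1) | (exact absurd h hwb5) | (exact absurd h hwba)
      | (exact absurd h hwbb) | (exact absurd h hwbc) | (exact absurd h hwbB)
      | (exact Or.inl h) | (exact Or.inr h)
  have hwcAB : wc = qA ∨ wc = qB := by
    have := htot wc
    simp only [Set.mem_insert_iff, Set.mem_singleton_iff] at this
    rcases this with h|h|h|h|h|h|h|h <;> first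
      | (exact absurd h hwc1) | (exact absurd h hwc5) | (exact absurd h hwca)
      | (exact absurd h hwcb) | (exact absurd h hwcc) | (exact absurd h hwcC)
      | (exact Or.inl h) | (exact Or.inr h)
  -- the three third points are pairwise distinct
  have hdist : ∀ (x y wx wy : P) (lx ly : L), R x lx → R p1 lx → R wx lx → wx ≠ p1 →
      R y ly → R p1 ly → R wy ly → x ≠ y → R x M → R y M → wx ≠ wy := by
    intro x y wx wy lx ly hx hp hwx hwx1 hy hpy hwy hxy hxM hyM he
    have hwy' : R wx ly := by rw [he]; exact hwy
    have hll : lx = ly := hpl wx p1 hwx1 lx ly hwx hp hwy' hpy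
    have hy' : R y lx := by rw [hll]; exact hy
    exact hMj1 x y lx hx hy' hxy hxM hyM hp
  have hwawb : wa ≠ wb :=
    hdist qa qb wa wb la1 lb1 hala1 h1la1 hRwa hwa1 hblb1 h1lb1 hRwb hba.symm haM hRbM
  have hwawc : wa ≠ wc :=
    hdist qa qc wa wc la1 lc1 hala1 h1la1 hRwa hwa1 hclc1 h1lc1 hRwc hca.symm haM hRcM
  have hwbwc : wb ≠ wc :=
    hdist qb qc wb wc lb1 lc1 hblb1 h1lb1 hRwb hwb1 hclc1 h1lc1 hRwc hbc hRbM hRcM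
  -- third points of the three p5-lines
  have hw5dist : ∀ (x wx w5 : P) (lx lx5 : L), R x lx → R p1 lx → R wx lx → wx ≠ x →
      R x lx5 → R p5 lx5 → R w5 lx5 → w5 ≠ wx := by
    intro x wx w5 lx lx5 hx hp1 hwx hwxx hx5 hp5 hw5 he
    have hw5' : R wx lx5 := by rw [← he]; exact hw5
    have : lx = lx5 := hpl wx x hwxx lx lx5 hwx hx hw5' hx5
    exact hnc15 ⟨lx, hp1, this ▸ hp5⟩
  obtain ⟨w5a, hw5a5, hw5aa, hw5a1, hSla5, hRw5a⟩ := hjoin5 qa la5 hala5 h5la5 ha1 ha5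
  obtain ⟨w5b, hw5b5, hw5bb, hw5b1, hSlb5, hRw5b⟩ := hjoin5 qb lb5 hblb5 h5lb5 hb1 hb5
  obtain ⟨w5c, hw5c5, hw5cc, hw5c1, hSlc5, hRw5c⟩ := hjoin5 qc lc5 hclc5 h5lc5 hc1 hc5
  have hw5aA : w5a ≠ qA := fun he => hncA ⟨la5, hala5, he ▸ hRw5a⟩
  have hw5bB : w5b ≠ qB := fun he => hncB ⟨lb5, hblb5, he ▸ hRw5b⟩
  have hw5cC : w5c ≠ qC := fun he => hncC ⟨lc5, hclc5, he ▸ hRw5c⟩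
  have hw5ab : w5a ≠ qb := fun he => hMj5 qa w5a la5 hala5 hRw5a hw5aa.symm haM (by rw [he]; exact hRbM) h5la5
  have hw5ac : w5a ≠ qc := fun he => hMj5 qa w5a la5 hala5 hRw5a hw5aa.symm haM (by rw [he]; exact hRcM) h5la5
  have hw5ba : w5b ≠ qa := fun he => hMj5 qb w5b lb5 hblb5 hRw5b hw5bb.symm hRbM (by rw [he]; exact haM) h5lb5
  have hw5bc : w5b ≠ qc := fun he => hMj5 qb w5b lb5 hblb5 hRw5b hw5bb.symm hRbM (by rw [he]; exact hRcM) h5lb5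
  have hw5ca : w5c ≠ qa := fun he => hMj5 qc w5c lc5 hclc5 hRw5c hw5cc.symm hRcM (by rw [he]; exact haM) h5lc5
  have hw5cb : w5c ≠ qb := fun he => hMj5 qc w5c lc5 hclc5 hRw5c hw5cc.symm hRcM (by rw [he]; exact hRbM) h5lc5
  have hw5aBC : w5a = qB ∨ w5a = qC := by
    have := htot w5a
    simp only [Set.mem_insert_iff, Set.mem_singleton_iff] at this
    rcases this with h|h|h|h|h|h|h|h <;> first
      | (exact absurd h hw5a1) | (exact absurd h hw5a5) | (exact absurd h hw5aa)
      | (exact absurd h hw5ab) | (exact absurd h hw5ac) | (exact absurd h hw5aA)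
      | (exact Or.inl h) | (exact Or.inr h)
  have hw5bAC : w5b = qA ∨ w5b = qC := by
    have := htot w5b
    simp only [Set.mem_insert_iff, Set.mem_singleton_iff] at this
    rcases this with h|h|h|h|h|h|h|h <;> first
      | (exact absurd h hw5b1) | (exact absurd h hw5b5) | (exact absurd h hw5ba)
      | (exact absurd h hw5bb) | (exact absurd h hw5bc) | (exact absurd h hw5bB)
      | (exact Or.inl h) | (exact Or.inr h)
  have hw5cAB : w5c = qA ∨ w5c = qB := by
    have := htot w5c
    simp only [Set.mem_insert_iff, Set.mem_singleton_iff] at this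
    rcases this with h|h|h|h|h|h|h|h <;> first
      | (exact absurd h hw5c1) | (exact absurd h hw5c5) | (exact absurd h hw5ca)
      | (exact absurd h hw5cb) | (exact absurd h hw5cc) | (exact absurd h hw5cC)
      | (exact Or.inl h) | (exact Or.inr h)
  have hw5awa : w5a ≠ wa := hw5dist qa wa w5a la1 la5 hala1 h1la1 hRwa hwaa hala5 h5la5 hRw5a
  have hw5bwb : w5b ≠ wb := hw5dist qb wb w5b lb1 lb5 hblb1 h1lb1 hRwb hwbb hblb5 h5lb5 hRw5b
  have hw5cwc : w5c ≠ wc := hw5dist qc wc w5c lc1 lc5 hclc1 h1lc1 hRwc hwcc hclc5 h5lc5 hRw5c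
  -- case split on the third point of la1
  rcases hwaBC.imp Eq.symm Eq.symm with rfl | rfl
  · -- wa = qB : sigma pattern
    rcases hwcAB.imp Eq.symm Eq.symm with rfl | rfl
    swap
    · exact absurd rfl hwawc
    rcases hwbAC.imp Eq.symm Eq.symm with rfl | rfl
    · exact absurd rfl hwbwc
    rcases hw5aBC.imp Eq.symm Eq.symm with rfl | rfl
    · exact absurd rfl hw5awa
    rcases hw5bAC.imp Eq.symm Eq.symm with rfl | rfl
    swap
    · exact absurd rfl hw5bwb
    rcases hw5cAB.imp Eq.symm Eq.symm with rfl | rfl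
    · exact absurd rfl hw5cwc
    exact chase R φ ψ hφ hiff p1 p5 qa qb qc qA qB qC
      h15 ha1.symm hB5.symm
      hA1 hAa' hAB hA5 hAC
      ha5.symm h51 hc5.symm hA5.symm
      hBa hB1 hC5 hCa
      hb5 hc1
      M N la1 lb1 lc1 la5 lb5 lc5
      hMS hNS hSla1 hSlb1 hSlc1 hSla5 hSlb5 hSlc5
  · -- wa = qC : tau pattern, apply chase with p1 and p5 swapped
    rcases hwbAC.imp Eq.symm Eq.symm with rfl | rfl
    swap
    · exact absurd rfl hwawb
    rcases hwcAB.imp Eq.symm Eq.symm with rfl | rfl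
    · exact absurd rfl hwbwc
    rcases hw5aBC.imp Eq.symm Eq.symm with rfl | rfl
    swap
    · exact absurd rfl hw5awa
    rcases hw5bAC.imp Eq.symm Eq.symm with rfl | rfl
    · exact absurd rfl hw5bwb
    rcases hw5cAB.imp Eq.symm Eq.symm with rfl | rfl
    swap
    · exact absurd rfl hw5cwc
    exact chase R φ ψ hφ hiff p5 p1 qa qb qc qA qB qC
      h51 ha5.symm hB1.symm
      hA5 hAa' hAB hA1 hAC
      ha1.symm h15 hc1.symm hA1.symm
      hBa hB5 hC1 hCa
      hb1 hc5
      M N la5 lb5 lc5 la1 lb1 lc1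
      hMS hNS hSla5 hSlb5 hSlc5 hSla1 hSlb1 hSlc1

end AuxAntipodal

/-- An antipodal plane of order `2` embeds in `PG(2,q)` iff `q` is a power of `3`
or `q ≡ 1 (mod 3)`. -/
theorem antipodal_order_two_embeds_iff (q : ℕ) (F : Type) [Field F] [Fintype F]
    (hF : Fintype.card F = q) :
    (∃ (P L : Type) (R : P → L → Prop),
        IsAntipodalPlane 2 R ∧ HasEmbedding R (PGIncidence F)) ↔
      (∃ h : ℕ, q = 3 ^ h) ∨ q % 3 = 1 := by
  constructor
  · rintro ⟨P, L, R, hAP, hE⟩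
    obtain ⟨c, hc⟩ := forward_dir hAP hE
    exact cond_of_root hF hc
  · intro hcond
    obtain ⟨c, hc⟩ := root_exists_of_cond hF hcond
    exact backward_dir hc
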